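/- (Weak dependence of score on mixing proportions.) Fix μ₁ < μ₂ ∈ ℝ, two mixing proportions π, π' ∈ (0,1), and x ∈ ℝ with x ≠ (μ₁+μ₂)/2. Writing p_{σ,π}(x) = π φ_{μ₁,σ}(x) + (1−π) φ_{μ₂,σ}(x), the dependence of the score on the mixing proportion vanishes: s_{p_{σ,π}}(x) − s_{p_{σ,π'}}(x) → 0 as σ → 0⁺. -/

import Mathlib

open MeasureTheory Filter

/-- Gaussian density with mean `μ` and standard deviation `σ`. -/
noncomputable def gaussian (μ σ : ℝ) (x : ℝ) : ℝ :=
  (σ * Real.sqrt (2 * Real.pi))⁻¹ * Real.exp (-(x - μ) ^ 2 / (2 * σ ^ 2))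

/-- The score of a density `ρ`: the derivative of its log. -/
noncomputable def score (ρ : ℝ → ℝ) (x : ℝ) : ℝ :=
  deriv (fun y => Real.log (ρ y)) x

/-- Fisher divergence between densities `q` and `p`. -/
noncomputable def fisherDiv (q p : ℝ → ℝ) : ℝ :=
  ∫ x : ℝ, q x * (score q x - score p x) ^ 2

lemma gaussian_pos {μ σ : ℝ} (hσ : 0 < σ) (x : ℝ) : 0 < gaussian μ σ x := by
  unfold gaussian; positivity

lemma gaussian_hasDerivAt (μ : ℝ) {σ : ℝ} (hσ : σ ≠ 0) (x : ℝ) :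
    HasDerivAt (gaussian μ σ) (gaussian μ σ x * (-(x - μ) / σ ^ 2)) x := by
  have h1 : HasDerivAt (fun y : ℝ => -(y - μ) ^ 2 / (2 * σ ^ 2))
      (-(x - μ) / σ ^ 2) x := by
    have : HasDerivAt (fun y : ℝ => -(y - μ) ^ 2 / (2 * σ ^ 2))
        ((-((2:ℕ) * (x - μ) ^ (2-1) * 1)) / (2 * σ ^ 2)) x := by
      simpa using ((((hasDerivAt_id x).sub_const μ).pow 2).neg).div_const (2 * σ ^ 2)
    convert this using 1
    field_simp
    ring
  have h2 := (h1.exp).const_mul ((σ * Real.sqrt (2 * Real.pi))⁻¹)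
  refine h2.congr_deriv ?_
  unfold gaussian
  ring

lemma score_mixture (μ₁ μ₂ w : ℝ) {σ : ℝ} (hσ : 0 < σ) (hw : w ∈ Set.Ioo (0:ℝ) 1) (x : ℝ) :
    score (fun y => w * gaussian μ₁ σ y + (1 - w) * gaussian μ₂ σ y) x
      = (w * gaussian μ₁ σ x * (-(x - μ₁) / σ ^ 2)
          + (1 - w) * gaussian μ₂ σ x * (-(x - μ₂) / σ ^ 2))
        / (w * gaussian μ₁ σ x + (1 - w) * gaussian μ₂ σ x) := by
  have hp : 0 < w * gaussian μ₁ σ x + (1 - w) * gaussian μ₂ σ x := by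
    have := gaussian_pos (μ := μ₁) hσ x
    have := gaussian_pos (μ := μ₂) hσ x
    have h2 := hw.2
    have h1 := hw.1
    have h3 : (0:ℝ) < 1 - w := by linarith
    positivity
  have hd : HasDerivAt (fun y => w * gaussian μ₁ σ y + (1 - w) * gaussian μ₂ σ y)
      (w * (gaussian μ₁ σ x * (-(x - μ₁) / σ ^ 2))
        + (1 - w) * (gaussian μ₂ σ x * (-(x - μ₂) / σ ^ 2))) x :=
    ((gaussian_hasDerivAt μ₁ hσ.ne' x).const_mul w).add
      ((gaussian_hasDerivAt μ₂ hσ.ne' x).const_mul (1 - w))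
  have := (hd.log hp.ne').deriv
  unfold score
  rw [this]
  ring_nf

/-- ratio of gaussians -/
lemma gaussian_ratio (μ₁ μ₂ : ℝ) {σ : ℝ} (hσ : 0 < σ) (x : ℝ) :
    gaussian μ₁ σ x = gaussian μ₂ σ x
      * Real.exp (-((μ₂ - μ₁) * (2 * x - μ₁ - μ₂) / 2) * (σ ^ 2)⁻¹) := by
  unfold gaussian
  rw [mul_assoc, ← Real.exp_add]
  congr 2
  field_simp
  ring

/-- algebraic identity for the score difference -/
lemma diff_identity (μ₁ μ₂ w w' σ x g₁ g₂ : ℝ) (hσ : σ ≠ 0) (hg₁ : 0 < g₁) (hg₂ : 0 < g₂)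
    (hP : w * g₁ + (1 - w) * g₂ ≠ 0) (hP' : w' * g₁ + (1 - w') * g₂ ≠ 0) :
    (w * g₁ * (-(x - μ₁) / σ ^ 2) + (1 - w) * g₂ * (-(x - μ₂) / σ ^ 2))
        / (w * g₁ + (1 - w) * g₂)
      - (w' * g₁ * (-(x - μ₁) / σ ^ 2) + (1 - w') * g₂ * (-(x - μ₂) / σ ^ 2))
        / (w' * g₁ + (1 - w') * g₂)
    = (μ₁ - μ₂) * (w - w') * (σ ^ 2)⁻¹ * (g₁ * g₂)
        / ((w * g₁ + (1 - w) * g₂) * (w' * g₁ + (1 - w') * g₂)) := by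
  rw [div_sub_div _ _ hP hP']
  congr 1
  ring

set_option maxHeartbeats 1000000 in
/-- weak dependence of the score on mixing proportions, small-variance
limit: away from the midpoint the score difference between two mixtures with
different mixing proportions vanishes as `σ → 0⁺`. -/
theorem score_weak_dependence_on_proportion_small_variance (μ₁ μ₂ w w' : ℝ)
    (hμ : μ₁ < μ₂) (hw : w ∈ Set.Ioo (0 : ℝ) 1) (hw' : w' ∈ Set.Ioo (0 : ℝ) 1)
    (x : ℝ) (hx : x ≠ (μ₁ + μ₂) / 2) :
    Tendsto
      (fun σ => score (fun y => w * gaussian μ₁ σ y + (1 - w) * gaussian μ₂ σ y) x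
        - score (fun y => w' * gaussian μ₁ σ y + (1 - w') * gaussian μ₂ σ y) x)
      (nhdsWithin 0 (Set.Ioi 0)) (nhds 0) := by
  obtain ⟨hw1, hw2⟩ := hw
  obtain ⟨hw1', hw2'⟩ := hw'
  set t : ℝ := (μ₂ - μ₁) * (2 * x - μ₁ - μ₂) / 2 with ht_def
  have ht : t ≠ 0 := by
    have h1 : μ₂ - μ₁ ≠ 0 := by linarith
    have h2 : 2 * x - μ₁ - μ₂ ≠ 0 := by
      intro h; apply hx; linarith
    simp [ht_def]
    exact ⟨h1, h2⟩
  set c : ℝ := |t| with hc_def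
  have hc : 0 < c := abs_pos.mpr ht
  set D : ℝ := w * w' * ((1 - w) * (1 - w')) with hD_def
  have hD : 0 < D := by
    have : (0:ℝ) < 1 - w := by linarith
    have : (0:ℝ) < 1 - w' := by linarith
    positivity
  set K : ℝ := |μ₁ - μ₂| * |w - w'| / D with hK_def
  have hK : 0 ≤ K := by positivity
  -- the dominating function
  have hdom : Tendsto (fun σ : ℝ => K * ((σ ^ 2)⁻¹ * Real.exp (-c * (σ ^ 2)⁻¹)))
      (nhdsWithin 0 (Set.Ioi 0)) (nhds 0) := by
    have hsq : Tendsto (fun σ : ℝ => σ ^ 2) (nhdsWithin 0 (Set.Ioi 0))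
        (nhdsWithin 0 (Set.Ioi 0)) := by
      rw [tendsto_nhdsWithin_iff]
      constructor
      · have : Tendsto (fun σ : ℝ => σ ^ 2) (nhds 0) (nhds 0) := by
          simpa using (continuous_pow 2).tendsto (0:ℝ)
        exact this.mono_left nhdsWithin_le_nhds
      · filter_upwards [self_mem_nhdsWithin] with σ hσ
        exact pow_pos (show (0:ℝ) < σ from hσ) 2
    have hinv : Tendsto (fun σ : ℝ => (σ ^ 2)⁻¹) (nhdsWithin 0 (Set.Ioi 0)) atTop :=
      tendsto_inv_nhdsGT_zero.comp hsq
    have hu : Tendsto (fun σ : ℝ => c * (σ ^ 2)⁻¹) (nhdsWithin 0 (Set.Ioi 0)) atTop :=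
      hinv.const_mul_atTop hc
    have hmain : Tendsto (fun y : ℝ => y ^ 1 * Real.exp (-y)) atTop (nhds 0) :=
      Real.tendsto_pow_mul_exp_neg_atTop_nhds_zero 1
    have hcomp := hmain.comp hu
    have : Tendsto (fun σ : ℝ => K / c * ((c * (σ ^ 2)⁻¹) ^ 1
        * Real.exp (-(c * (σ ^ 2)⁻¹)))) (nhdsWithin 0 (Set.Ioi 0)) (nhds 0) := by
      simpa using hcomp.const_mul (K / c)
    refine this.congr fun σ => ?_
    rw [pow_one, ← neg_mul, mul_assoc c]
    calc K / c * (c * ((σ ^ 2)⁻¹ * Real.exp (-c * (σ ^ 2)⁻¹)))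
        = K / c * c * ((σ ^ 2)⁻¹ * Real.exp (-c * (σ ^ 2)⁻¹)) := by ring
      _ = K * ((σ ^ 2)⁻¹ * Real.exp (-c * (σ ^ 2)⁻¹)) := by
          rw [div_mul_cancel₀ K hc.ne']
  -- the pointwise bound
  apply squeeze_zero_norm' _ hdom
  filter_upwards [self_mem_nhdsWithin] with σ hσ
  have hσ : (0:ℝ) < σ := hσ
  set g₁ := gaussian μ₁ σ x with hg₁_def
  set g₂ := gaussian μ₂ σ x with hg₂_def
  have hg₁ : 0 < g₁ := gaussian_pos hσ x
  have hg₂ : 0 < g₂ := gaussian_pos hσ x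
  have h1w : (0:ℝ) < 1 - w := by linarith
  have h1w' : (0:ℝ) < 1 - w' := by linarith
  have hP : 0 < w * g₁ + (1 - w) * g₂ := by positivity
  have hP' : 0 < w' * g₁ + (1 - w') * g₂ := by positivity
  rw [score_mixture μ₁ μ₂ w hσ ⟨hw1, hw2⟩ x, score_mixture μ₁ μ₂ w' hσ ⟨hw1', hw2'⟩ x,
    diff_identity μ₁ μ₂ w w' σ x g₁ g₂ hσ.ne' hg₁ hg₂ hP.ne' hP'.ne']
  rw [Real.norm_eq_abs, abs_div, abs_mul, abs_mul, abs_of_pos (by positivity : (0:ℝ) < (σ^2)⁻¹),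
    abs_of_pos (mul_pos hg₁ hg₂), abs_of_pos (mul_pos hP hP')]
  rw [div_le_iff₀ (mul_pos hP hP')]
  -- key: g₁ * g₂ ≤ exp (-c σ⁻²) * max-square, and P P' ≥ D * that square
  have hratio := gaussian_ratio μ₁ μ₂ hσ x
  rw [← hg₁_def, ← hg₂_def, ← ht_def] at hratio
  have key : g₁ * g₂ * D ≤ Real.exp (-c * (σ ^ 2)⁻¹) * ((w * g₁ + (1 - w) * g₂)
      * (w' * g₁ + (1 - w') * g₂)) := by
    rcases le_or_gt 0 t with htpos | htneg
    · have htpos' : 0 < t := lt_of_le_of_ne htpos (Ne.symm ht)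
      have hct : c = t := abs_of_pos htpos'
      -- g₁ = g₂ * exp (-t σ⁻²), so g₁ g₂ = g₂² exp(-c σ⁻²)
      have h1 : g₁ * g₂ = Real.exp (-c * (σ ^ 2)⁻¹) * g₂ ^ 2 := by
        rw [hratio, hct]; ring
      have h2 : D * g₂ ^ 2 ≤ (w * g₁ + (1 - w) * g₂) * (w' * g₁ + (1 - w') * g₂) := by
        have hA : (1 - w) * g₂ ≤ w * g₁ + (1 - w) * g₂ := by nlinarith
        have hB : (1 - w') * g₂ ≤ w' * g₁ + (1 - w') * g₂ := by nlinarith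
        have hle := mul_le_mul hA hB (by positivity) hP.le
        have hww : w * w' ≤ 1 := by nlinarith
        nlinarith [mul_nonneg (sub_nonneg.mpr hww)
          (by positivity : (0:ℝ) ≤ (1 - w) * (1 - w') * g₂ ^ 2)]
      calc g₁ * g₂ * D = Real.exp (-c * (σ ^ 2)⁻¹) * (D * g₂ ^ 2) := by rw [h1]; ring
        _ ≤ _ := by
          apply mul_le_mul_of_nonneg_left h2 (Real.exp_nonneg _)
    · have hct : c = -t := abs_of_neg htneg
      have h2eq : g₂ = g₁ * Real.exp (t * (σ ^ 2)⁻¹) := by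
        rw [hratio, mul_assoc, ← Real.exp_add]
        have : -t * (σ ^ 2)⁻¹ + t * (σ ^ 2)⁻¹ = 0 := by ring
        rw [this, Real.exp_zero, mul_one]
      have h1 : g₁ * g₂ = Real.exp (-c * (σ ^ 2)⁻¹) * g₁ ^ 2 := by
        conv_lhs => rw [h2eq]
        rw [hct]
        have : -(-t) * (σ ^ 2)⁻¹ = t * (σ ^ 2)⁻¹ := by ring
        rw [this]
        ring
      have h2 : D * g₁ ^ 2 ≤ (w * g₁ + (1 - w) * g₂) * (w' * g₁ + (1 - w') * g₂) := by
        have hA : w * g₁ ≤ w * g₁ + (1 - w) * g₂ := by nlinarith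
        have hB : w' * g₁ ≤ w' * g₁ + (1 - w') * g₂ := by nlinarith
        have hle := mul_le_mul hA hB (by positivity) hP.le
        have hww : (1 - w) * (1 - w') ≤ 1 := by nlinarith
        nlinarith [mul_nonneg (sub_nonneg.mpr hww)
          (by positivity : (0:ℝ) ≤ w * w' * g₁ ^ 2)]
      calc g₁ * g₂ * D = Real.exp (-c * (σ ^ 2)⁻¹) * (D * g₁ ^ 2) := by rw [h1]; ring
        _ ≤ _ := by
          apply mul_le_mul_of_nonneg_left h2 (Real.exp_nonneg _)
  -- conclude
  have expand : K * ((σ ^ 2)⁻¹ * Real.exp (-c * (σ ^ 2)⁻¹))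
      * ((w * g₁ + (1 - w) * g₂) * (w' * g₁ + (1 - w') * g₂))
    = |μ₁ - μ₂| * |w - w'| * (σ ^ 2)⁻¹
      * (Real.exp (-c * (σ ^ 2)⁻¹) * ((w * g₁ + (1 - w) * g₂)
          * (w' * g₁ + (1 - w') * g₂)) / D) := by
    rw [hK_def]
    field_simp
  rw [expand]
  have hfinal : g₁ * g₂ ≤ Real.exp (-c * (σ ^ 2)⁻¹) * ((w * g₁ + (1 - w) * g₂)
      * (w' * g₁ + (1 - w') * g₂)) / D := by
    rw [le_div_iff₀ hD]
    exact key
  rw [abs_mul]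
  have hcoef : (0:ℝ) ≤ |μ₁ - μ₂| * |w - w'| * (σ ^ 2)⁻¹ := by positivity
  exact mul_le_mul_of_nonneg_left hfinal hcoef
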